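/- Let a₁ < a₂ < a₃ be positive integers with a₃ ∉ {a₁ + a₂, 2a₁, 2a₂}. Then there exists a real θ such that cos(a₁θ) + cos(a₂θ) + cos(a₃θ) ≤ −3/2. -/

import Mathlib

open Finset Real

lemma sum_cos_zero (n : ℕ) (k : ℤ) (hk : ¬ (n:ℤ) ∣ k) :
    ∑ m ∈ Finset.range n, Real.cos ((k : ℝ) * ((2*m+1) * Real.pi / n)) = 0 := by
  rcases Nat.eq_zero_or_pos n with rfl | hn
  · simp
  have hn' : (n:ℂ) ≠ 0 := by exact_mod_cast hn.ne'
  set z : ℂ := Complex.exp (2 * Real.pi * Complex.I * k / n) with hzdef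
  have hzn : z ^ n = 1 := by
    rw [← Complex.exp_nat_mul]
    have h : (n:ℂ) * (2 * Real.pi * Complex.I * k / n) = k * (2 * Real.pi * Complex.I) := by
      field_simp
    rw [h, Complex.exp_int_mul_two_pi_mul_I]
  have hz1 : z ≠ 1 := by
    intro h
    rw [Complex.exp_eq_one_iff] at h
    obtain ⟨t, ht⟩ := h
    apply hk
    refine ⟨t, ?_⟩
    have hne : (2 * (Real.pi:ℂ) * Complex.I) ≠ 0 := by
      simp [Complex.I_ne_zero, Real.pi_ne_zero]
    have hkc : (k:ℂ) = n * t := by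
      field_simp [hn'] at ht
      apply mul_left_cancel₀ hne
      linear_combination (2 * (Real.pi:ℂ) * Complex.I) * ht
    exact_mod_cast hkc
  have key : ∀ m ∈ Finset.range n,
      Complex.exp (((k : ℝ) * ((2*m+1) * Real.pi / n) : ℝ) * Complex.I)
        = Complex.exp ((Real.pi:ℂ) * Complex.I * k / n) * z ^ m := by
    intro m _
    rw [hzdef, ← Complex.exp_nat_mul, ← Complex.exp_add]
    congr 1
    push_cast
    field_simp
    ring
  have hre : ∀ m : ℕ, Real.cos ((k : ℝ) * ((2*m+1) * Real.pi / n))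
      = (Complex.exp (((k : ℝ) * ((2*m+1) * Real.pi / n) : ℝ) * Complex.I)).re := by
    intro m
    rw [Complex.exp_ofReal_mul_I_re]
  calc ∑ m ∈ Finset.range n, Real.cos ((k : ℝ) * ((2*m+1) * Real.pi / n))
      = ∑ m ∈ Finset.range n,
          (Complex.exp (((k : ℝ) * ((2*m+1) * Real.pi / n) : ℝ) * Complex.I)).re := by
        exact Finset.sum_congr rfl (fun m _ => hre m)
    _ = (∑ m ∈ Finset.range n,
          Complex.exp (((k : ℝ) * ((2*m+1) * Real.pi / n) : ℝ) * Complex.I)).re := by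
        rw [Complex.re_sum]
    _ = (∑ m ∈ Finset.range n, Complex.exp ((Real.pi:ℂ) * Complex.I * k / n) * z ^ m).re := by
        rw [Finset.sum_congr rfl key]
    _ = 0 := by
        rw [← Finset.mul_sum, geom_sum_eq hz1, hzn]
        simp

theorem case_three_exists_cos_sum_le (a₁ a₂ a₃ : ℕ) (h₁ : 0 < a₁)
    (h₁₂ : a₁ < a₂) (h₂₃ : a₂ < a₃)
    (hsum : a₃ ≠ a₁ + a₂) (h2a₁ : a₃ ≠ 2 * a₁) (h2a₂ : a₃ ≠ 2 * a₂) :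
    ∃ θ : ℝ, Real.cos (a₁ * θ) + Real.cos (a₂ * θ) + Real.cos (a₃ * θ) ≤
      -3/2 := by
  have ha₃ : 0 < a₃ := lt_trans (lt_trans h₁ h₁₂) h₂₃
  -- the sample points
  set x : ℕ → ℝ := fun m => (2*m+1) * Real.pi / a₃ with hxdef
  -- non-divisibility helper
  have hnd : ∀ k : ℤ, 0 < k → k < 2*a₃ → k ≠ (a₃:ℤ) → ¬ (a₃:ℤ) ∣ k := by
    rintro k hk0 hk2 hkne ⟨c, rfl⟩
    have hc1 : 1 ≤ c := by nlinarith
    have hc2 : c < 2 := by nlinarith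
    have : c = 1 := by omega
    exact hkne (by rw [this, mul_one])
  -- general vanishing sums in the needed shape
  have hS : ∀ k : ℤ, ¬ (a₃:ℤ) ∣ k →
      ∑ m ∈ Finset.range a₃, Real.cos ((k:ℝ) * x m) = 0 := by
    intro k hk
    have := sum_cos_zero a₃ k hk
    rw [← this]
  -- individual divisibility facts
  have hd1 : ¬ (a₃:ℤ) ∣ (a₁:ℤ) := hnd _ (by omega) (by omega) (by omega)
  have hd2 : ¬ (a₃:ℤ) ∣ (a₂:ℤ) := hnd _ (by omega) (by omega) (by omega)
  have hd3 : ¬ (a₃:ℤ) ∣ (2*a₁:ℤ) := hnd _ (by omega) (by omega) (by omega)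
  have hd4 : ¬ (a₃:ℤ) ∣ (2*a₂:ℤ) := hnd _ (by omega) (by omega) (by omega)
  have hd5 : ¬ (a₃:ℤ) ∣ ((a₁:ℤ) + a₂) := hnd _ (by omega) (by omega) (by omega)
  have hd6 : ¬ (a₃:ℤ) ∣ ((a₁:ℤ) - a₂) := by
    intro hd
    refine hnd ((a₂:ℤ) - a₁) (by omega) (by omega) (by omega) ?_
    have : ((a₂:ℤ) - a₁) = -((a₁:ℤ) - a₂) := by ring
    rw [this, dvd_neg]
    exact hd
  -- first-order sums
  have h1 : ∑ m ∈ Finset.range a₃, Real.cos (a₁ * x m) = 0 := by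
    have := hS a₁ hd1
    rw [← this]
    exact Finset.sum_congr rfl (fun m _ => by congr 1 <;> push_cast <;> try ring)
  have h2 : ∑ m ∈ Finset.range a₃, Real.cos (a₂ * x m) = 0 := by
    have := hS a₂ hd2
    rw [← this]
    exact Finset.sum_congr rfl (fun m _ => by congr 1 <;> push_cast <;> try ring)
  -- squared sums
  have h11 : ∑ m ∈ Finset.range a₃, Real.cos (a₁ * x m) ^ 2 = a₃ / 2 := by
    have hz : ∑ m ∈ Finset.range a₃, Real.cos (2 * ((a₁:ℝ) * x m)) = 0 := by
      have := hS (2*a₁) hd3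
      rw [← this]
      exact Finset.sum_congr rfl (fun m _ => by congr 1 <;> push_cast <;> try ring)
    have : ∀ m ∈ Finset.range a₃, Real.cos (a₁ * x m) ^ 2
        = 1/2 + Real.cos (2 * ((a₁:ℝ) * x m)) / 2 := fun m _ => Real.cos_sq _
    rw [Finset.sum_congr rfl this, Finset.sum_add_distrib, Finset.sum_const,
      Finset.card_range, ← Finset.sum_div, hz]
    simp only [nsmul_eq_mul]
    ring
  have h22 : ∑ m ∈ Finset.range a₃, Real.cos (a₂ * x m) ^ 2 = a₃ / 2 := by
    have hz : ∑ m ∈ Finset.range a₃, Real.cos (2 * ((a₂:ℝ) * x m)) = 0 := by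
      have := hS (2*a₂) hd4
      rw [← this]
      exact Finset.sum_congr rfl (fun m _ => by congr 1 <;> push_cast <;> try ring)
    have : ∀ m ∈ Finset.range a₃, Real.cos (a₂ * x m) ^ 2
        = 1/2 + Real.cos (2 * ((a₂:ℝ) * x m)) / 2 := fun m _ => Real.cos_sq _
    rw [Finset.sum_congr rfl this, Finset.sum_add_distrib, Finset.sum_const,
      Finset.card_range, ← Finset.sum_div, hz]
    simp only [nsmul_eq_mul]
    ring
  -- cross sum
  have h12 : ∑ m ∈ Finset.range a₃, Real.cos (a₁ * x m) * Real.cos (a₂ * x m) = 0 := by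
    have hp : ∑ m ∈ Finset.range a₃, Real.cos ((a₁:ℝ) * x m + (a₂:ℝ) * x m) = 0 := by
      have := hS ((a₁:ℤ) + a₂) hd5
      rw [← this]
      exact Finset.sum_congr rfl (fun m _ => by congr 1 <;> push_cast <;> try ring)
    have hq : ∑ m ∈ Finset.range a₃, Real.cos ((a₁:ℝ) * x m - (a₂:ℝ) * x m) = 0 := by
      have := hS ((a₁:ℤ) - a₂) hd6
      rw [← this]
      exact Finset.sum_congr rfl (fun m _ => by congr 1 <;> push_cast <;> try ring)
    have hexp : ∀ m ∈ Finset.range a₃, Real.cos (a₁ * x m) * Real.cos (a₂ * x m)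
        = (Real.cos ((a₁:ℝ) * x m + (a₂:ℝ) * x m)
           + Real.cos ((a₁:ℝ) * x m - (a₂:ℝ) * x m)) / 2 := by
      intro m _
      rw [Real.cos_add, Real.cos_sub]
      ring
    rw [Finset.sum_congr rfl hexp, ← Finset.sum_div, Finset.sum_add_distrib, hp, hq]
    norm_num
  -- the quadratic sum identity
  set g : ℕ → ℝ := fun m => Real.cos (a₁ * x m) + Real.cos (a₂ * x m) with hgdef
  have key : ∑ m ∈ Finset.range a₃, (g m + 1/2) * (2 - g m) = 0 := by
    have hexp : ∀ m ∈ Finset.range a₃, (g m + 1/2) * (2 - g m)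
        = (3/2) * Real.cos (a₁ * x m) + (3/2) * Real.cos (a₂ * x m)
          - Real.cos (a₁ * x m) ^ 2 - Real.cos (a₂ * x m) ^ 2
          - 2 * (Real.cos (a₁ * x m) * Real.cos (a₂ * x m)) + 1 := by
      intro m _
      rw [hgdef]
      ring
    rw [Finset.sum_congr rfl hexp]
    simp only [Finset.sum_add_distrib, Finset.sum_sub_distrib]
    rw [← Finset.mul_sum, ← Finset.mul_sum, ← Finset.mul_sum,
      h1, h2, h11, h22, h12, Finset.sum_const, Finset.card_range]
    simp only [nsmul_eq_mul]
    ring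
  -- existence of a good sample point
  have hm : ∃ m ∈ Finset.range a₃, g m ≤ -(1/2) := by
    by_contra hcon
    push_neg at hcon
    have hnonneg : ∀ m ∈ Finset.range a₃, 0 ≤ (g m + 1/2) * (2 - g m) := by
      intro m hmm
      have hlt := hcon m hmm
      have c1 := Real.cos_le_one ((a₁:ℝ) * x m)
      have c2 := Real.cos_le_one ((a₂:ℝ) * x m)
      have hgle : g m ≤ 2 := by rw [hgdef]; simp only []; linarith
      nlinarith
    have hall := (Finset.sum_eq_zero_iff_of_nonneg hnonneg).1 key
    have hg2 : ∀ m ∈ Finset.range a₃, g m = 2 := by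
      intro m hmm
      have h0 := hall m hmm
      have hlt := hcon m hmm
      rcases mul_eq_zero.1 h0 with h' | h'
      · linarith
      · linarith
    have hsum2 : ∑ m ∈ Finset.range a₃, g m = 2 * a₃ := by
      rw [Finset.sum_congr rfl hg2, Finset.sum_const, Finset.card_range]
      simp only [nsmul_eq_mul]
      ring
    have hsum0 : ∑ m ∈ Finset.range a₃, g m = 0 := by
      rw [hgdef]
      rw [Finset.sum_add_distrib, h1, h2]
      norm_num
    rw [hsum0] at hsum2
    have : (0:ℝ) < (a₃:ℝ) := by exact_mod_cast ha₃
    linarith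
  obtain ⟨m, hmem, hgle⟩ := hm
  refine ⟨x m, ?_⟩
  have hc3 : Real.cos (a₃ * x m) = -1 := by
    have ha3ne : (a₃:ℝ) ≠ 0 := by positivity
    have hx : (a₃:ℝ) * x m = Real.pi + (m:ℤ) * (2 * Real.pi) := by
      rw [hxdef]
      field_simp
      push_cast
      ring
    rw [hx, Real.cos_add_int_mul_two_pi, Real.cos_pi]
  rw [hc3]
  have : g m ≤ -(1/2) := hgle
  rw [hgdef] at this
  simp only [] at this
  linarith
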